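/- arXiv:1501.06627 — 6 statements merged into one kernel-verified Lean document; each statement's English description precedes it below -/
import Mathlib

section
/- Consider an assignment problem with two agents and m objects where both agents have identical utilities given by positive integers w_1, …, w_m with Σ_{j=1}^m w_j = 2W. Then there exists a complete discrete CEEI-DISC assignment if and only if there exists a subset S ⊆ {1,…,m} with Σ_{j∈S} w_j = W (i.e., the Partition instance is a yes-instance). -/
open Finset

/-- Utility an agent with (row) utility function `ui` derives from a (row) allocation `xi`. -/
noncomputable def utilOf {m : ℕ} (ui : Fin m → ℝ) (xi : Fin m → ℝ) : ℝ :=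
  ∑ j, xi j * ui j

/-- A complete fractional assignment: entries in [0,1], every column (object) fully allocated. -/
def IsFracAssignment {n m : ℕ} (x : Fin n → Fin m → ℝ) : Prop :=
  (∀ i j, 0 ≤ x i j ∧ x i j ≤ 1) ∧ (∀ j, ∑ i, x i j = 1)

/-- A complete discrete assignment: entries in {0,1}, every column (object) fully allocated. -/
def IsDiscreteAssignment {n m : ℕ} (x : Fin n → Fin m → ℝ) : Prop :=
  (∀ i j, x i j = 0 ∨ x i j = 1) ∧ (∀ j, ∑ i, x i j = 1)

/-- `x` is a CEEI-DISC assignment witnessed by the price vector `p`: prices are nonnegative,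
and every agent's bundle is a discrete bundle of price at most 1 that maximizes the agent's
utility among all discrete bundles of price at most 1. -/
noncomputable def CEEIDiscWith {n m : ℕ} (u : Fin n → Fin m → ℝ)
    (x : Fin n → Fin m → ℝ) (p : Fin m → ℝ) : Prop :=
  (∀ j, 0 ≤ p j) ∧
  ∀ i, (∀ j, x i j = 0 ∨ x i j = 1) ∧ (∑ j, x i j * p j ≤ 1) ∧
    ∀ y : Fin m → ℝ, (∀ j, y j = 0 ∨ y j = 1) → (∑ j, y j * p j ≤ 1) →
      utilOf (u i) y ≤ utilOf (u i) (x i)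

noncomputable def CEEIDisc {n m : ℕ} (u : Fin n → Fin m → ℝ)
    (x : Fin n → Fin m → ℝ) : Prop :=
  ∃ p : Fin m → ℝ, CEEIDiscWith u x p

/-- `x` is a CEEI-FRAC assignment witnessed by the price vector `p`: prices are nonnegative,
and every agent's bundle lies in [0,1]^m, costs at most 1, and maximizes the agent's utility
among all fractional bundles of price at most 1. -/
noncomputable def CEEIFracWith {n m : ℕ} (u : Fin n → Fin m → ℝ)
    (x : Fin n → Fin m → ℝ) (p : Fin m → ℝ) : Prop :=
  (∀ j, 0 ≤ p j) ∧
  ∀ i, (∀ j, 0 ≤ x i j ∧ x i j ≤ 1) ∧ (∑ j, x i j * p j ≤ 1) ∧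
    ∀ y : Fin m → ℝ, (∀ j, 0 ≤ y j ∧ y j ≤ 1) → (∑ j, y j * p j ≤ 1) →
      utilOf (u i) y ≤ utilOf (u i) (x i)

noncomputable def CEEIFrac {n m : ℕ} (u : Fin n → Fin m → ℝ)
    (x : Fin n → Fin m → ℝ) : Prop :=
  ∃ p : Fin m → ℝ, CEEIFracWith u x p

/-- The Nash welfare of an assignment. -/
noncomputable def nash {n m : ℕ} (u : Fin n → Fin m → ℝ)
    (x : Fin n → Fin m → ℝ) : ℝ :=
  ∏ i, utilOf (u i) (x i)
/-- Partition reduction: with two agents having identical integer utilities summing to 2W,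
a complete discrete CEEI-DISC assignment exists iff the Partition instance is a yes-instance. -/
theorem ceei_disc_iff_partition (m W : ℕ) (w : Fin m → ℕ) (hw : ∀ j, 0 < w j)
    (hsum : ∑ j, w j = 2 * W)
    (u : Fin 2 → Fin m → ℝ) (hu : ∀ i j, u i j = (w j : ℝ)) :
    (∃ x : Fin 2 → Fin m → ℝ, IsDiscreteAssignment x ∧ CEEIDisc u x) ↔
      (∃ S : Finset (Fin m), ∑ j ∈ S, w j = W) := by
  have hsumR : (∑ j, (w j : ℝ)) = 2 * W := by exact_mod_cast hsum
  constructor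
  · rintro ⟨x, ⟨hx01, hxcol⟩, p, hp0, hag⟩
    have huy : ∀ i (y : Fin m → ℝ), utilOf (u i) y = ∑ j, y j * (w j : ℝ) := by
      intro i y; simp [utilOf, hu]
    obtain ⟨h0d, h0b, h0m⟩ := hag 0
    obtain ⟨h1d, h1b, h1m⟩ := hag 1
    have h01 : ∑ j, x 1 j * (w j : ℝ) ≤ ∑ j, x 0 j * (w j : ℝ) := by
      have := h0m (x 1) h1d h1b; rwa [huy, huy] at this
    have h10 : ∑ j, x 0 j * (w j : ℝ) ≤ ∑ j, x 1 j * (w j : ℝ) := by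
      have := h1m (x 0) h0d h0b; rwa [huy, huy] at this
    have hcol : ∀ j, x 0 j + x 1 j = 1 := by
      intro j; have := hxcol j; rwa [Fin.sum_univ_two] at this
    have hsum2 : (∑ j, x 0 j * (w j : ℝ)) + ∑ j, x 1 j * (w j : ℝ) = 2 * W := by
      calc (∑ j, x 0 j * (w j : ℝ)) + ∑ j, x 1 j * (w j : ℝ)
          = ∑ j, (x 0 j + x 1 j) * (w j : ℝ) := by
            rw [← Finset.sum_add_distrib]; apply Finset.sum_congr rfl
            intro j _; ring
        _ = ∑ j, (w j : ℝ) := by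
            apply Finset.sum_congr rfl; intro j _; rw [hcol j, one_mul]
        _ = 2 * W := hsumR
    have hW0 : ∑ j, x 0 j * (w j : ℝ) = W := by linarith
    refine ⟨Finset.univ.filter (fun j => x 0 j = 1), ?_⟩
    have hc : ((∑ j ∈ Finset.univ.filter (fun j => x 0 j = 1), w j : ℕ) : ℝ) = W := by
      rw [Nat.cast_sum, Finset.sum_filter, ← hW0]
      apply Finset.sum_congr rfl
      intro j _
      rcases h0d j with h | h <;> simp [h]
    exact_mod_cast hc
  · rintro ⟨S, hS⟩
    rcases Nat.eq_zero_or_pos m with hm | hm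
    · subst hm
      refine ⟨fun _ _ => 0, ⟨fun i j => j.elim0, fun j => j.elim0⟩,
        fun _ => 0, fun j => le_refl 0, fun i => ⟨fun j => j.elim0, by simp, ?_⟩⟩
      intro y _ _
      simp [utilOf]
    · have hWpos : 0 < W := by
        have h1 : 0 < ∑ j, w j :=
          Finset.sum_pos (fun j _ => hw j) (by
            simpa [Finset.univ_nonempty_iff] using Fin.pos_iff_nonempty.mp hm)
        omega
      have hWR : (0:ℝ) < W := by exact_mod_cast hWpos
      have hSR : (∑ j ∈ S, (w j : ℝ)) = W := by exact_mod_cast hS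
      set x : Fin 2 → Fin m → ℝ :=
        ![fun j => if j ∈ S then 1 else 0, fun j => if j ∈ S then 0 else 1] with hx
      set p : Fin m → ℝ := fun j => (w j : ℝ) / W with hp
      have hbud : ∀ (y : Fin m → ℝ), (∑ j, y j * p j) = (∑ j, y j * (w j : ℝ)) / W := by
        intro y
        rw [Finset.sum_div]
        apply Finset.sum_congr rfl
        intro j _; rw [hp]; ring
      have hval0 : ∑ j, x 0 j * (w j : ℝ) = W := by
        rw [← hSR]
        simp only [hx, Matrix.cons_val_zero, ite_mul, one_mul, zero_mul]
        rw [Finset.sum_ite_mem, Finset.univ_inter]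
      have hval1 : ∑ j, x 1 j * (w j : ℝ) = W := by
        have : ∀ j, x 1 j * (w j : ℝ) = (w j : ℝ) - x 0 j * (w j : ℝ) := by
          intro j
          simp only [hx, Matrix.cons_val_zero, Matrix.cons_val_one, Matrix.head_cons]
          by_cases h : j ∈ S <;> simp [h]
        rw [Finset.sum_congr rfl (fun j _ => this j), Finset.sum_sub_distrib, hsumR, hval0]
        ring
      have hvals : ∀ i : Fin 2, ∑ j, x i j * (w j : ℝ) = W := by
        intro i; fin_cases i
        · exact hval0
        · exact hval1
      have hdisc : ∀ i j, x i j = 0 ∨ x i j = 1 := by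
        intro i j; fin_cases i <;>
          · simp only [hx, Matrix.cons_val_zero, Matrix.cons_val_one, Matrix.head_cons]
            by_cases h : j ∈ S <;> simp [h]
      refine ⟨x, ⟨hdisc, ?_⟩, p, ?_, ?_⟩
      · intro j
        rw [Fin.sum_univ_two]
        simp only [hx, Matrix.cons_val_zero, Matrix.cons_val_one, Matrix.head_cons]
        by_cases h : j ∈ S <;> simp [h]
      · intro j; rw [hp]; positivity
      · intro i
        refine ⟨hdisc i, ?_, ?_⟩
        · rw [hbud, hvals i, div_self (ne_of_gt hWR)]
        · intro y hyd hyb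
          rw [hbud] at hyb
          have hy : ∑ j, y j * (w j : ℝ) ≤ W := by
            have := (div_le_one hWR).mp hyb
            linarith
          have e1 : utilOf (u i) y = ∑ j, y j * (w j : ℝ) := by simp [utilOf, hu]
          have e2 : utilOf (u i) (x i) = ∑ j, x i j * (w j : ℝ) := by simp [utilOf, hu]
          rw [e1, e2, hvals i]
          exact hy
end

section
/- Consider an assignment problem with n agents and 3n objects where all agents have identical utilities given by positive integers w_1, …, w_{3n} with W/4 < w_j < W/2 for every j and Σ_{j=1}^{3n} w_j = nW. Then there exists a complete discrete CEEI-DISC assignment if and only if {1,…,3n} can be partitioned into n disjoint sets E_1, …, E_n with Σ_{j∈E_i} w_j = W for every i (i.e., the 3-Partition instance is a yes-instance). -/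
open Finset

/-- 3-Partition reduction: with n agents having identical integer utilities over 3n objects
(each weight strictly between W/4 and W/2, total weight nW), a complete discrete CEEI-DISC
assignment exists iff the 3-Partition instance is a yes-instance. -/
theorem ceei_disc_iff_three_partition (n W : ℕ) (w : Fin (3 * n) → ℕ)
    (hw : ∀ j, 0 < w j)
    (hbound : ∀ j, W < 4 * w j ∧ 2 * w j < W)
    (hsum : ∑ j, w j = n * W)
    (u : Fin n → Fin (3 * n) → ℝ) (hu : ∀ i j, u i j = (w j : ℝ)) :
    (∃ x : Fin n → Fin (3 * n) → ℝ, IsDiscreteAssignment x ∧ CEEIDisc u x) ↔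
      (∃ E : Fin n → Finset (Fin (3 * n)),
        (∀ i k, i ≠ k → Disjoint (E i) (E k)) ∧
        (∀ j, ∃ i, j ∈ E i) ∧
        (∀ i, ∑ j ∈ E i, w j = W)) := by
  classical
  constructor
  · rintro ⟨x, ⟨hx01, hxcol⟩, p, hp0, hpi⟩
    set E : Fin n → Finset (Fin (3 * n)) := fun i => univ.filter (fun j => x i j = 1) with hE
    have hmemE : ∀ i j, j ∈ E i ↔ x i j = 1 := by intro i j; simp [hE]
    have hdisj : ∀ i k, i ≠ k → Disjoint (E i) (E k) := by
      intro i k hik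
      rw [Finset.disjoint_left]
      intro j hji hjk
      rw [hmemE] at hji hjk
      have h2 : (2 : ℝ) ≤ ∑ i', x i' j := by
        have hsub : ({i, k} : Finset (Fin n)).sum (fun i' => x i' j) ≤ ∑ i', x i' j := by
          apply Finset.sum_le_sum_of_subset_of_nonneg (Finset.subset_univ _)
          intro i' _ _
          rcases hx01 i' j with h | h <;> simp [h]
        rwa [Finset.sum_pair hik, hji, hjk, one_add_one_eq_two] at hsub
      rw [hxcol j] at h2; norm_num at h2
    have hcov : ∀ j, ∃ i, j ∈ E i := by
      intro j
      by_contra hno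
      push_neg at hno
      have hz : ∑ i, x i j = 0 := by
        apply Finset.sum_eq_zero
        intro i _
        rcases hx01 i j with h | h
        · exact h
        · exact absurd ((hmemE i j).mpr h) (fun hm => (hno i) hm)
      rw [hxcol j] at hz; norm_num at hz
    refine ⟨E, hdisj, hcov, ?_⟩
    intro i
    have hn : 0 < n := i.pos
    have husum : ∀ i', utilOf (u i') (x i') = ∑ j ∈ E i', (w j : ℝ) := by
      intro i'
      have hterm : ∀ j, x i' j * u i' j = if j ∈ E i' then (w j : ℝ) else 0 := by
        intro j
        rcases hx01 i' j with h | h <;> simp [hu, hmemE, h]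
      rw [utilOf, Finset.sum_congr rfl (fun j _ => hterm j), Finset.sum_ite_mem,
        Finset.univ_inter]
    have hUeq : ∀ a b (y : Fin (3 * n) → ℝ), utilOf (u a) y = utilOf (u b) y := by
      intro a b y; simp [utilOf, hu]
    have hle : ∀ a b : Fin n, utilOf (u a) (x a) ≤ utilOf (u b) (x b) := by
      intro a b
      obtain ⟨hdisc, hbud, -⟩ := hpi a
      obtain ⟨-, -, hmax⟩ := hpi b
      have h := hmax (x a) hdisc hbud
      rwa [← hUeq a b (x a)] at h
    have htot : ∑ i', utilOf (u i') (x i') = ((n * W : ℕ) : ℝ) := by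
      simp only [utilOf, hu]
      rw [Finset.sum_comm]
      have hj : ∀ j : Fin (3 * n), ∑ i', x i' j * (w j : ℝ) = (w j : ℝ) := by
        intro j
        rw [← Finset.sum_mul, hxcol j, one_mul]
      rw [Finset.sum_congr rfl (fun j _ => hj j), ← Nat.cast_sum, hsum]
    have hconst : ∑ i', utilOf (u i') (x i') = n * utilOf (u i) (x i) := by
      rw [Finset.sum_congr rfl (fun k _ => le_antisymm (hle k i) (hle i k))]
      simp [Finset.card_univ, mul_comm]
    have hV : utilOf (u i) (x i) = (W : ℝ) := by
      have h1 : (n : ℝ) * utilOf (u i) (x i) = (n : ℝ) * (W : ℝ) := by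
        rw [← hconst, htot]; push_cast; ring
      exact mul_left_cancel₀ (by exact_mod_cast hn.ne') h1
    have h2 : (↑(∑ j ∈ E i, w j) : ℝ) = (W : ℝ) := by
      rw [Nat.cast_sum, ← husum i, hV]
    exact_mod_cast h2
  · rintro ⟨E, hdisj, hcov, hWsum⟩
    rcases Nat.eq_zero_or_pos n with hn | hn
    · subst hn
      exact ⟨fun i => i.elim0, ⟨fun i => i.elim0, fun j => j.elim0⟩,
        fun _ => 0, fun j => j.elim0, fun i => i.elim0⟩
    · have hW : 0 < W := by
        have j0 : Fin (3 * n) := ⟨0, by omega⟩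
        have h1 := (hbound j0).2
        have h2 := hw j0
        omega
      have hWr : (0 : ℝ) < (W : ℝ) := by exact_mod_cast hW
      have hWne : (W : ℝ) ≠ 0 := hWr.ne'
      have huniq : ∀ (j : Fin (3 * n)) (a b : Fin n), j ∈ E a → j ∈ E b → a = b := by
        intro j a b ha hb
        by_contra hab
        exact (Finset.disjoint_left.mp (hdisj a b hab) ha) hb
      have hEW : ∀ i, ∑ j ∈ E i, (w j : ℝ) = (W : ℝ) := by
        intro i
        rw [← Nat.cast_sum, hWsum i]
      refine ⟨fun i j => if j ∈ E i then (1 : ℝ) else 0, ⟨?_, ?_⟩,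
        fun j => (w j : ℝ) / W, ?_, ?_⟩
      · intro i j; by_cases h : j ∈ E i <;> simp [h]
      · intro j
        obtain ⟨i0, hi0⟩ := hcov j
        have hiff : ∀ i, j ∈ E i ↔ i = i0 :=
          fun i => ⟨fun h => huniq j i i0 h hi0, fun h => h ▸ hi0⟩
        simp [hiff]
      · intro j; positivity
      · intro i
        have hbudget : ∑ j, (if j ∈ E i then (1 : ℝ) else 0) * ((w j : ℝ) / W) = 1 := by
          have hterm : ∀ j, (if j ∈ E i then (1 : ℝ) else 0) * ((w j : ℝ) / W)
              = if j ∈ E i then (w j : ℝ) / W else 0 := by intro j; split <;> simp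
          rw [Finset.sum_congr rfl (fun j _ => hterm j), Finset.sum_ite_mem,
            Finset.univ_inter, ← Finset.sum_div, hEW i, div_self hWne]
        have hxi : utilOf (u i) (fun j => if j ∈ E i then (1 : ℝ) else 0) = (W : ℝ) := by
          simp only [utilOf, hu]
          have hterm : ∀ j, (if j ∈ E i then (1 : ℝ) else 0) * (w j : ℝ)
              = if j ∈ E i then (w j : ℝ) else 0 := by intro j; split <;> simp
          rw [Finset.sum_congr rfl (fun j _ => hterm j), Finset.sum_ite_mem,
            Finset.univ_inter, hEW i]
        refine ⟨?_, le_of_eq hbudget, ?_⟩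
        · intro j; by_cases h : j ∈ E i <;> simp [h]
        · intro y hy hyp
          rw [hxi]
          calc utilOf (u i) y = (W : ℝ) * ∑ j, y j * ((w j : ℝ) / W) := by
                rw [Finset.mul_sum, utilOf]
                refine Finset.sum_congr rfl fun j _ => ?_
                rw [hu]
                field_simp
            _ ≤ (W : ℝ) * 1 := mul_le_mul_of_nonneg_left hyp hWr.le
            _ = (W : ℝ) := mul_one _
end

section
/- In an assignment problem where all agents have identical utility functions (u_{ij} = u_{i'j} for all agents i, i' and objects j), with each object valued positively, a complete discrete assignment x is CEEI-DISC if and only if all agents receive the same utility, i.e., u_i(x_i) = u_{i'}(x_{i'}) for all agents i and i'. -/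
open Finset

/-- With identical utility functions (each object valued positively), a complete discrete
assignment is CEEI-DISC iff all agents receive the same utility. -/
theorem ceei_disc_iff_equal_utilities (n m : ℕ) (v : Fin m → ℝ) (hv : ∀ j, 0 < v j)
    (u : Fin n → Fin m → ℝ) (hu : ∀ i j, u i j = v j)
    (x : Fin n → Fin m → ℝ) (hx : IsDiscreteAssignment x) :
    CEEIDisc u x ↔ ∀ i i', utilOf (u i) (x i) = utilOf (u i') (x i') := by
  have hux : ∀ i (y : Fin m → ℝ), utilOf (u i) y = ∑ j, y j * v j := by
    intro i y; unfold utilOf; simp [hu]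
  constructor
  · rintro ⟨p, hp0, hmax⟩ i i'
    have h1 := (hmax i).2.2 (x i') (hmax i').1 (hmax i').2.1
    have h2 := (hmax i').2.2 (x i) (hmax i).1 (hmax i).2.1
    simp only [hux] at h1 h2 ⊢
    linarith
  · intro heq
    rcases Nat.eq_zero_or_pos n with hn | hn
    · subst hn
      exact ⟨fun _ => 0, fun j => le_refl 0, fun i => i.elim0⟩
    rcases Nat.eq_zero_or_pos m with hm | hm
    · subst hm
      refine ⟨fun j => j.elim0, fun j => j.elim0, fun i => ⟨hx.1 i, ?_, ?_⟩⟩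
      · simp
      · intro y hy hyb; simp [utilOf]
    set i0 : Fin n := ⟨0, hn⟩ with hi0
    set U := ∑ j, x i0 j * v j with hUdef
    have hA : ∀ i, ∑ j, x i j * v j = U := by
      intro i
      have := heq i i0
      simpa [hux] using this
    have hsum : (n : ℝ) * U = ∑ j, v j := by
      calc (n:ℝ) * U = ∑ _i : Fin n, U := by simp [mul_comm]
        _ = ∑ i, ∑ j, x i j * v j := by
              exact Finset.sum_congr rfl (fun i _ => (hA i).symm)
        _ = ∑ j, (∑ i, x i j) * v j := by
              rw [Finset.sum_comm]
              exact Finset.sum_congr rfl (fun j _ => (Finset.sum_mul _ _ _).symm)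
        _ = ∑ j, v j := by simp [hx.2]
    have hvpos : 0 < ∑ j, v j :=
      Finset.sum_pos (fun j _ => hv j) ⟨⟨0, hm⟩, Finset.mem_univ _⟩
    have hn' : (0:ℝ) < n := by exact_mod_cast hn
    have hUpos : 0 < U := by
      by_contra h
      push_neg at h
      nlinarith [hsum ▸ hvpos]
    have hprice : ∀ (y : Fin m → ℝ), ∑ j, y j * (v j / U) = (∑ j, y j * v j) / U := by
      intro y
      rw [Finset.sum_div]
      exact Finset.sum_congr rfl (fun j _ => (mul_div_assoc _ _ _).symm)
    refine ⟨fun j => v j / U, fun j => div_nonneg (hv j).le hUpos.le,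
      fun i => ⟨hx.1 i, ?_, ?_⟩⟩
    · rw [hprice, hA i, div_self hUpos.ne']
    · intro y hy hyb
      rw [hprice, div_le_one hUpos] at hyb
      simp only [hux, hA i]
      exact hyb
end

section
/- In an assignment problem where for every object some agent assigns it positive utility and for every agent some object has positive utility to them, a CEEI-FRAC fractional assignment always exists; in particular, there exists a fractional assignment maximizing the Nash welfare ∏_{i∈N} u_i(x_i), and every such maximizer is CEEI-FRAC. -/
open Finset

lemma capply {n m : ℕ} (i : Fin n) (j : Fin m) :
    Continuous fun x : Fin n → Fin m → ℝ => x i j :=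
  (continuous_apply j).comp (continuous_apply i)

lemma nash_continuous {n m : ℕ} (u : Fin n → Fin m → ℝ) : Continuous (nash u) := by
  unfold nash utilOf
  exact continuous_finset_prod _ fun i _ => continuous_finset_sum _ fun j _ =>
    (capply i j).mul continuous_const

lemma exists_nash_max {n m : ℕ} (hn : 0 < n) (u : Fin n → Fin m → ℝ) :
    ∃ x, IsFracAssignment x ∧ ∀ y, IsFracAssignment y → nash u y ≤ nash u x := by
  have hc : IsClosed {x : Fin n → Fin m → ℝ | IsFracAssignment x} := by
    have he : {x : Fin n → Fin m → ℝ | IsFracAssignment x} =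
        (⋂ i, ⋂ j, {x : Fin n → Fin m → ℝ | 0 ≤ x i j ∧ x i j ≤ 1}) ∩
          (⋂ j, {x : Fin n → Fin m → ℝ | ∑ i, x i j = 1}) := by
      ext x
      simp only [Set.mem_setOf_eq, Set.mem_inter_iff, Set.mem_iInter, IsFracAssignment]
    rw [he]
    refine IsClosed.inter (isClosed_iInter fun i => isClosed_iInter fun j => ?_)
      (isClosed_iInter fun j => ?_)
    · exact IsClosed.inter (isClosed_le continuous_const (capply i j))
        (isClosed_le (capply i j) continuous_const)
    · exact isClosed_eq (continuous_finset_sum _ fun i _ => capply i j) continuous_const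
  have hK : IsCompact {x : Fin n → Fin m → ℝ | IsFracAssignment x} := by
    have h1 : IsCompact (Set.pi Set.univ fun _ : Fin n =>
        Set.pi Set.univ fun _ : Fin m => Set.Icc (0:ℝ) 1) :=
      isCompact_univ_pi fun _ => isCompact_univ_pi fun _ => isCompact_Icc
    refine h1.of_isClosed_subset hc ?_
    intro x hx
    intro i _ j _
    exact ⟨(hx.1 i j).1, (hx.1 i j).2⟩
  have hne : (0:ℝ) < (n:ℝ) := by exact_mod_cast hn
  have hx0 : IsFracAssignment (fun _ _ => (n:ℝ)⁻¹ : Fin n → Fin m → ℝ) := by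
    constructor
    · intro i j
      constructor
      · positivity
      · rw [inv_le_one_iff₀]
        right; exact_mod_cast hn
    · intro j
      simp [Finset.sum_const, card_univ]
      field_simp
  obtain ⟨x, hxS, hmax⟩ := hK.exists_isMaxOn ⟨_, hx0⟩ (nash_continuous u).continuousOn
  exact ⟨x, hxS, fun y hy => hmax hy⟩


lemma uniform_frac {n m : ℕ} (hn : 0 < n) :
    IsFracAssignment (fun _ _ => (n:ℝ)⁻¹ : Fin n → Fin m → ℝ) := by
  have hne : (0:ℝ) < (n:ℝ) := by exact_mod_cast hn
  constructor
  · intro i j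
    refine ⟨by positivity, ?_⟩
    rw [inv_le_one_iff₀]; right; exact_mod_cast hn
  · intro j
    simp [Finset.sum_const, card_univ]
    field_simp

lemma maximizer_ceei {n m : ℕ} (hn : 0 < n) (u : Fin n → Fin m → ℝ)
    (hnn : ∀ i j, 0 ≤ u i j) (hag : ∀ i, ∃ j, 0 < u i j)
    (x : Fin n → Fin m → ℝ) (hx : IsFracAssignment x)
    (hmax : ∀ y, IsFracAssignment y → nash u y ≤ nash u x) :
    CEEIFrac u x := by
  set v : Fin n → ℝ := fun i => utilOf (u i) (x i) with hv
  have h0 : 0 < nash u (fun _ _ => (n:ℝ)⁻¹ : Fin n → Fin m → ℝ) := by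
    apply Finset.prod_pos
    intro i _
    obtain ⟨j0, hj0⟩ := hag i
    unfold utilOf
    apply Finset.sum_pos' (fun j _ => mul_nonneg (by positivity) (hnn i j))
    refine ⟨j0, mem_univ _, mul_pos ?_ hj0⟩
    have : (0:ℝ) < (n:ℝ) := by exact_mod_cast hn
    positivity
  have hnx : 0 < nash u x := lt_of_lt_of_le h0 (hmax _ (uniform_frac hn))
  have hvpos : ∀ i, 0 < v i := by
    intro i
    rcases lt_or_eq_of_le (Finset.sum_nonneg fun j _ =>
      mul_nonneg (hx.1 i j).1 (hnn i j) : (0:ℝ) ≤ v i) with h | h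
    · exact h
    · exfalso
      have : nash u x = 0 := Finset.prod_eq_zero (mem_univ i) h.symm
      rw [this] at hnx; exact lt_irrefl _ hnx
  -- exchange lemma
  have hexch : ∀ i k j, 0 < x i j → u k j * v i ≤ u i j * v k := by
    intro i k j hxij
    by_cases hik : i = k
    · subst hik; exact le_refl _
    have hki : k ≠ i := fun h => hik h.symm
    set a := u i j with ha
    set b := u k j with hb
    have key : ∀ ε : ℝ, 0 < ε → ε ≤ x i j → b * v i - a * v k ≤ ε * (a * b) := by
      intro ε hε hεle
      set y : Fin n → Fin m → ℝ := fun l j' =>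
        x l j' + (if l = i ∧ j' = j then -ε else 0) + (if l = k ∧ j' = j then ε else 0)
        with hy
      have hxkj : x k j + x i j ≤ 1 := by
        calc x k j + x i j = ∑ l ∈ ({k, i} : Finset (Fin n)), x l j := by
              rw [Finset.sum_pair hki]
          _ ≤ ∑ l, x l j := Finset.sum_le_sum_of_subset_of_nonneg (subset_univ _)
              (fun l _ _ => (hx.1 l j).1)
          _ = 1 := hx.2 j
      have hyfrac : IsFracAssignment y := by
        constructor
        · intro l j'
          obtain ⟨hb1, hb2⟩ := hx.1 l j'
          simp only [hy]
          by_cases hA : l = i ∧ j' = j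
          · rw [if_pos hA, if_neg (fun h : l = k ∧ j' = j => hik (hA.1.symm.trans h.1))]
            rw [hA.1, hA.2]
            constructor <;> linarith [hεle, (hx.1 i j).1, (hx.1 i j).2, hε]
          · rw [if_neg hA]
            by_cases hB : l = k ∧ j' = j
            · rw [if_pos hB, hB.1, hB.2]
              constructor <;> linarith [hxkj, (hx.1 i j).1, (hx.1 k j).1, hεle, hε]
            · rw [if_neg hB]
              constructor <;> linarith
        · intro j'
          simp only [hy]
          rw [Finset.sum_add_distrib, Finset.sum_add_distrib, hx.2 j']
          simp only [ite_and, Finset.sum_ite_eq', mem_univ, if_pos]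
          by_cases hj' : j' = j <;> simp [hj']
      have hutil : ∀ l, utilOf (u l) (y l) =
          v l + (if l = i then -(ε * u l j) else 0) + (if l = k then ε * u l j else 0) := by
        intro l
        show (∑ j', y l j' * u l j') = _
        simp only [hy, add_mul, Finset.sum_add_distrib, ite_mul, zero_mul, neg_mul]
        simp only [ite_and]
        by_cases hli : l = i <;> by_cases hlk : l = k <;>
          simp [hli, hlk, Finset.sum_ite_eq', neg_mul, hv, utilOf]
      have hk' : k ∈ (univ : Finset (Fin n)).erase i := mem_erase.2 ⟨hki, mem_univ _⟩
      set P := ∏ l ∈ ((univ : Finset (Fin n)).erase i).erase k, v l with hP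
      have hPpos : 0 < P := Finset.prod_pos fun l _ => hvpos l
      have hny : nash u y = (v i - ε * a) * ((v k + ε * b) * P) := by
        unfold nash
        rw [← Finset.mul_prod_erase univ _ (mem_univ i),
          ← Finset.mul_prod_erase _ _ hk']
        have e1 : utilOf (u i) (y i) = v i - ε * a := by
          rw [hutil i]; simp [hik]; ring
        have e2 : utilOf (u k) (y k) = v k + ε * b := by
          rw [hutil k]; simp [hki]; exact Or.inl rfl
        have e3 : ∏ l ∈ ((univ : Finset (Fin n)).erase i).erase k, utilOf (u l) (y l) = P := by
          refine Finset.prod_congr rfl fun l hl => ?_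
          have hlk : l ≠ k := (mem_erase.1 hl).1
          have hli : l ≠ i := (mem_erase.1 (mem_erase.1 hl).2).1
          rw [hutil l]; simp [hli, hlk]
        rw [e1, e2, e3]
      have hnx' : nash u x = v i * (v k * P) := by
        unfold nash
        rw [← Finset.mul_prod_erase univ _ (mem_univ i),
          ← Finset.mul_prod_erase _ _ hk']
      have hle := hmax y hyfrac
      rw [hny, hnx'] at hle
      have h2 : (v i - ε * a) * (v k + ε * b) ≤ v i * v k := by
        have h3 : ((v i - ε * a) * (v k + ε * b)) * P ≤ (v i * v k) * P := by
          nlinarith [hle]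
        exact le_of_mul_le_mul_right h3 hPpos
      nlinarith [h2, hε, mul_pos hε hε]
    by_contra hcon
    push_neg at hcon
    set d := b * v i - a * v k with hd
    have hdpos : 0 < d := by simp only [hd]; linarith
    have hab : 0 ≤ a * b := mul_nonneg (hnn i j) (hnn k j)
    set e := d / (a * b + 1) with he
    have hepos : 0 < e := div_pos hdpos (by linarith)
    have heeq : e * (a * b + 1) = d := div_mul_cancel₀ _ (by linarith)
    set ε := min (x i j) e with hε
    have hεpos : 0 < ε := lt_min hxij hepos
    have hεle : ε ≤ x i j := min_le_left _ _
    have hεe : ε ≤ e := min_le_right _ _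
    have := key ε hεpos hεle
    nlinarith [this, hεe, hab, heeq, hεpos, hepos, hdpos]
  -- prices
  have hune : (univ : Finset (Fin n)).Nonempty := ⟨⟨0, hn⟩, mem_univ _⟩
  set p : Fin m → ℝ := fun j => univ.sup' hune (fun i => u i j / v i) with hp
  have hple : ∀ i j, u i j / v i ≤ p j := by
    intro i j
    show u i j / v i ≤ univ.sup' hune fun i => u i j / v i
    exact Finset.le_sup' (fun i => u i j / v i) (mem_univ i)
  have hpnn : ∀ j, 0 ≤ p j := fun j =>
    le_trans (div_nonneg (hnn ⟨0, hn⟩ j) (hvpos _).le) (hple _ j)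
  have hpeq : ∀ i j, 0 < x i j → p j = u i j / v i := by
    intro i j hxij
    obtain ⟨k, -, hk⟩ := Finset.exists_mem_eq_sup' hune (fun i => u i j / v i)
    rw [show p j = univ.sup' hune (fun i => u i j / v i) from rfl, hk]
    apply le_antisymm
    · rw [div_le_div_iff₀ (hvpos k) (hvpos i)]
      exact hexch i k j hxij
    · rw [← hk]; exact hple i j
  refine ⟨p, hpnn, fun i => ⟨hx.1 i, ?_, ?_⟩⟩
  · have heq : ∑ j, x i j * p j = ∑ j, x i j * u i j / v i := by
      refine Finset.sum_congr rfl fun j _ => ?_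
      rcases eq_or_lt_of_le (hx.1 i j).1 with h | h
      · rw [← h]; simp
      · rw [hpeq i j h, mul_div_assoc]
    rw [heq, ← Finset.sum_div]
    rw [show (∑ j, x i j * u i j) = v i from rfl, div_self (hvpos i).ne']
  · intro y hyb hyc
    show (∑ j, y j * u i j) ≤ v i
    calc ∑ j, y j * u i j ≤ ∑ j, y j * (p j * v i) := by
          refine Finset.sum_le_sum fun j _ => ?_
          exact mul_le_mul_of_nonneg_left ((div_le_iff₀ (hvpos i)).1 (hple i j)) (hyb j).1
      _ = (∑ j, y j * p j) * v i := by
          rw [Finset.sum_mul]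
          exact Finset.sum_congr rfl fun j _ => (mul_assoc _ _ _).symm
      _ ≤ 1 * v i := mul_le_mul_of_nonneg_right hyc (hvpos i).le
      _ = v i := one_mul _

/-- A CEEI-FRAC fractional assignment always exists; in particular a Nash-welfare-maximizing
fractional assignment exists and every such maximizer is CEEI-FRAC. -/
theorem ceei_frac_exists (n m : ℕ) (u : Fin n → Fin m → ℝ)
    (hnn : ∀ i j, 0 ≤ u i j)
    (hobj : ∀ j, ∃ i, 0 < u i j) (hag : ∀ i, ∃ j, 0 < u i j) :
    (∃ x : Fin n → Fin m → ℝ, IsFracAssignment x ∧ CEEIFrac u x) ∧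
    (∃ x : Fin n → Fin m → ℝ, IsFracAssignment x ∧
      ∀ y : Fin n → Fin m → ℝ, IsFracAssignment y → nash u y ≤ nash u x) ∧
    (∀ x : Fin n → Fin m → ℝ, IsFracAssignment x →
      (∀ y : Fin n → Fin m → ℝ, IsFracAssignment y → nash u y ≤ nash u x) →
      CEEIFrac u x) := by
  rcases Nat.eq_zero_or_pos n with hn | hn
  · subst hn
    have hm : m = 0 := by
      by_contra hm
      obtain ⟨i, -⟩ := hobj ⟨0, Nat.pos_of_ne_zero hm⟩
      exact i.elim0
    subst hm
    have hfa : IsFracAssignment (fun _ _ => 0 : Fin 0 → Fin 0 → ℝ) :=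
      ⟨fun i => i.elim0, fun j => j.elim0⟩
    have hce : CEEIFrac u (fun _ _ => 0) := ⟨fun j => j.elim0, fun j => j.elim0, fun i => i.elim0⟩
    have hmx : ∀ y : Fin 0 → Fin 0 → ℝ, IsFracAssignment y →
        nash u y ≤ nash u (fun _ _ => 0) := by
      intro y _
      simp [nash]
    exact ⟨⟨_, hfa, hce⟩, ⟨_, hfa, hmx⟩, fun x _ _ =>
      ⟨fun j => j.elim0, fun j => j.elim0, fun i => i.elim0⟩⟩
  · obtain ⟨x, hxf, hxm⟩ := exists_nash_max hn u
    exact ⟨⟨x, hxf, maximizer_ceei hn u hnn hag x hxf hxm⟩, ⟨x, hxf, hxm⟩,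
      fun z hzf hzm => maximizer_ceei hn u hnn hag z hzf hzm⟩
end

section
/- In an assignment problem with n agents where all agents have identical utility functions with u_j > 0 for every object j and Σ_{j=1}^m u_j = T, every CEEI-FRAC fractional assignment gives every agent utility exactly T/n. -/
open Finset

/-- With identical, everywhere-positive utility functions summing to T, every CEEI-FRAC
fractional assignment gives every agent utility exactly T/n. -/
theorem ceei_frac_identical_utilities (n m : ℕ) (v : Fin m → ℝ) (hv : ∀ j, 0 < v j)
    (T : ℝ) (hT : ∑ j, v j = T)
    (u : Fin n → Fin m → ℝ) (hu : ∀ i j, u i j = v j)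
    (x : Fin n → Fin m → ℝ) (hx : IsFracAssignment x) (hc : CEEIFrac u x) :
    ∀ i, utilOf (u i) (x i) = T / n := by
  intro i
  obtain ⟨p, hp, hmax⟩ := hc
  -- all agents get the same utility
  have hsame : ∀ a b : Fin n, utilOf (u a) (x a) ≤ utilOf (u b) (x b) := by
    intro a b
    obtain ⟨hbnd, hbud, _⟩ := hmax a
    obtain ⟨_, _, hopt⟩ := hmax b
    have := hopt (x a) hbnd hbud
    calc utilOf (u a) (x a) = utilOf (u b) (x a) := by
          unfold utilOf; simp [hu]
      _ ≤ utilOf (u b) (x b) := this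
  have heq : ∀ a : Fin n, utilOf (u a) (x a) = utilOf (u i) (x i) :=
    fun a => le_antisymm (hsame a i) (hsame i a)
  -- sum of utilities equals T
  have hsum : ∑ a, utilOf (u a) (x a) = T := by
    unfold utilOf
    rw [Finset.sum_comm]
    calc ∑ j, ∑ a, x a j * u a j = ∑ j, v j := by
          apply Finset.sum_congr rfl
          intro j _
          have : ∑ a, x a j * u a j = (∑ a, x a j) * v j := by
            rw [Finset.sum_mul]
            exact Finset.sum_congr rfl fun a _ => by rw [hu]
          rw [this, hx.2 j, one_mul]
      _ = T := hT
  have hn : (0:ℝ) < n := by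
    have : 0 < n := Fin.pos i
    exact_mod_cast this
  have : (n : ℝ) * utilOf (u i) (x i) = T := by
    rw [← hsum, Finset.sum_congr rfl fun a _ => heq a, Finset.sum_const,
      Finset.card_univ, Fintype.card_fin, nsmul_eq_mul]
  field_simp
  linarith [this]
end

section
/- Consider an assignment problem with n agents and 3n objects where all agents have identical utilities given by positive integers w_1, …, w_{3n} with W/4 < w_j < W/2 for every j and Σ_{j=1}^{3n} w_j = nW. Then there exists a CEEI-FRAC discrete assignment if and only if {1,…,3n} can be partitioned into n disjoint sets E_1, …, E_n with Σ_{j∈E_i} w_j = W for every i (i.e., the 3-Partition instance is a yes-instance). -/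
open Finset

/-- 3-Partition reduction for CEEI-FRAC: with n agents having identical integer utilities
over 3n objects (each weight strictly between W/4 and W/2, total weight nW), a CEEI-FRAC
discrete assignment exists iff the 3-Partition instance is a yes-instance. -/
theorem ceei_frac_iff_three_partition (n W : ℕ) (w : Fin (3 * n) → ℕ)
    (hw : ∀ j, 0 < w j)
    (hbound : ∀ j, W < 4 * w j ∧ 2 * w j < W)
    (hsum : ∑ j, w j = n * W)
    (u : Fin n → Fin (3 * n) → ℝ) (hu : ∀ i j, u i j = (w j : ℝ)) :
    (∃ x : Fin n → Fin (3 * n) → ℝ, IsDiscreteAssignment x ∧ CEEIFrac u x) ↔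
      (∃ E : Fin n → Finset (Fin (3 * n)),
        (∀ i k, i ≠ k → Disjoint (E i) (E k)) ∧
        (∀ j, ∃ i, j ∈ E i) ∧
        (∀ i, ∑ j ∈ E i, w j = W)) := by
  constructor
  · rintro ⟨x, ⟨hxd, hxcol⟩, p, hp0, hceei⟩
    rcases Nat.eq_zero_or_pos n with hn | hn
    · subst hn
      exact ⟨fun i => ∅, fun i => i.elim0, fun j => j.elim0, fun i => i.elim0⟩
    have hm : 0 < 3 * n := by omega
    have hW : 0 < W := by
      have h1 := hbound ⟨0, hm⟩
      have h2 := hw ⟨0, hm⟩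
      omega
    have hbox : ∀ i j, 0 ≤ x i j ∧ x i j ≤ 1 := by
      intro i j
      rcases hxd i j with h | h <;> simp [h]
    set E : Fin n → Finset (Fin (3 * n)) := fun i => univ.filter (fun j => x i j = 1) with hE
    have hxval : ∀ i j, x i j = if j ∈ E i then (1 : ℝ) else 0 := by
      intro i j
      rcases hxd i j with h | h <;> simp [hE, h]
    have hutil : ∀ i, utilOf (u i) (x i) = ∑ j ∈ E i, (w j : ℝ) := by
      intro i
      unfold utilOf
      calc ∑ j, x i j * u i j = ∑ j, (if j ∈ E i then (w j : ℝ) else 0) := by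
            refine Finset.sum_congr rfl fun j _ => ?_
            rw [hxval, hu]; split <;> simp
        _ = ∑ j ∈ E i, (w j : ℝ) := by
            rw [Finset.sum_ite_mem, Finset.univ_inter]
    have heq : ∀ i k, utilOf (u i) (x i) = utilOf (u k) (x k) := by
      have key : ∀ i k, utilOf (u i) (x i) ≤ utilOf (u k) (x k) := by
        intro i k
        have h1 := (hceei k).2.2 (x i) (hbox i) (hceei i).2.1
        have huik : u i = u k := funext fun j => by rw [hu, hu]
        rw [huik]; exact h1
      exact fun i k => le_antisymm (key i k) (key k i)
    have htot : ∑ i, utilOf (u i) (x i) = (n : ℝ) * W := by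
      unfold utilOf
      calc ∑ i, ∑ j, x i j * u i j = ∑ j, (∑ i, x i j) * (w j : ℝ) := by
            rw [Finset.sum_comm]
            refine Finset.sum_congr rfl fun j _ => ?_
            rw [Finset.sum_mul]
            exact Finset.sum_congr rfl fun i _ => by rw [hu]
        _ = ∑ j, (w j : ℝ) := by
            refine Finset.sum_congr rfl fun j _ => ?_
            rw [hxcol j, one_mul]
        _ = (n : ℝ) * W := by exact_mod_cast hsum
    have hUeq : ∀ i, utilOf (u i) (x i) = W := by
      intro i
      have hne : (n : ℝ) ≠ 0 := Nat.cast_ne_zero.mpr hn.ne'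
      have h1 : (n : ℝ) * utilOf (u i) (x i) = (n : ℝ) * W := by
        rw [← htot, Finset.sum_congr rfl fun k _ => heq k i]
        simp [mul_comm]
      exact mul_left_cancel₀ hne h1
    refine ⟨E, ?_, ?_, ?_⟩
    · intro i k hik
      rw [Finset.disjoint_left]
      intro j hji hjk
      have hxi : x i j = 1 := by simpa [hE] using hji
      have hxk : x k j = 1 := by simpa [hE] using hjk
      have h2 : (1 : ℝ) + 1 ≤ ∑ i', x i' j := by
        have hsub : ({i, k} : Finset (Fin n)) ⊆ univ := subset_univ _
        have := Finset.sum_le_sum_of_subset_of_nonneg hsub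
          (fun i' _ _ => (hbox i' j).1)
        rwa [Finset.sum_pair hik, hxi, hxk] at this
      rw [hxcol j] at h2; linarith
    · intro j
      by_contra h
      push_neg at h
      have h0 : ∀ i, x i j = 0 := by
        intro i
        rcases hxd i j with h' | h'
        · exact h'
        · exact absurd (by simpa [hE] using h') (h i)
      have := hxcol j
      rw [Finset.sum_congr rfl fun i _ => h0 i] at this
      simp at this
    · intro i
      have h1 := hUeq i
      rw [hutil i] at h1
      exact_mod_cast h1
  · rintro ⟨E, hdisj, hcover, hsumE⟩
    rcases Nat.eq_zero_or_pos n with hn | hn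
    · subst hn
      exact ⟨fun i => i.elim0, ⟨fun i => i.elim0, fun j => j.elim0⟩,
        fun _ => 0, fun j => le_refl 0, fun i => i.elim0⟩
    have hm : 0 < 3 * n := by omega
    have hW : 0 < W := by
      have h1 := hbound ⟨0, hm⟩
      have h2 := hw ⟨0, hm⟩
      omega
    have hWR : (0 : ℝ) < W := by exact_mod_cast hW
    have huniq : ∀ j, ∃! i, j ∈ E i := by
      intro j
      obtain ⟨i, hi⟩ := hcover j
      refine ⟨i, hi, fun k hk => ?_⟩
      by_contra hne
      exact absurd hi (Finset.disjoint_left.mp (hdisj k i hne) hk)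
    have hxutil : ∀ i, ∑ j, (if j ∈ E i then (1 : ℝ) else 0) * (w j : ℝ) = W := by
      intro i
      calc ∑ j, (if j ∈ E i then (1 : ℝ) else 0) * (w j : ℝ)
          = ∑ j, (if j ∈ E i then (w j : ℝ) else 0) := by
            refine Finset.sum_congr rfl fun j _ => ?_
            split <;> simp
        _ = ∑ j ∈ E i, (w j : ℝ) := by rw [Finset.sum_ite_mem, Finset.univ_inter]
        _ = W := by exact_mod_cast hsumE i
    have hcost : ∀ y : Fin (3 * n) → ℝ,
        ∑ j, y j * ((w j : ℝ) / W) = (∑ j, y j * (w j : ℝ)) / W := by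
      intro y
      rw [Finset.sum_div]
      exact Finset.sum_congr rfl fun j _ => by ring
    refine ⟨fun i j => if j ∈ E i then 1 else 0, ⟨?_, ?_⟩, fun j => (w j : ℝ) / W, ?_, ?_⟩
    · intro i j; dsimp only; split <;> norm_num
    · intro j
      obtain ⟨i, hi, hiu⟩ := huniq j
      rw [Finset.sum_eq_single i (fun k _ hk => by
        have : j ∉ E k := fun h => hk (hiu k h)
        simp [this]) (by simp)]
      simp [hi]
    · intro j; positivity
    · intro i
      refine ⟨fun j => by dsimp only; split <;> norm_num, ?_, ?_⟩
      · rw [hcost, hxutil i, div_self hWR.ne']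
      · intro y hy hyb
        rw [hcost] at hyb
        have h2 : ∑ j, y j * (w j : ℝ) ≤ W := (div_le_one hWR).mp hyb
        unfold utilOf
        calc ∑ j, y j * u i j = ∑ j, y j * (w j : ℝ) := by
              exact Finset.sum_congr rfl fun j _ => by rw [hu]
          _ ≤ W := h2
          _ = ∑ j, (if j ∈ E i then (1 : ℝ) else 0) * (w j : ℝ) := (hxutil i).symm
          _ = ∑ j, (if j ∈ E i then (1 : ℝ) else 0) * u i j := by
              exact Finset.sum_congr rfl fun j _ => by rw [hu]
end
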